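/- Let R₁, R₂, R₃ ∈ ℂ^{n×n} be Hermitian positive semi-definite, A₀ Hermitian, G skew-Hermitian with -iG positive semi-definite, and ker G ∩ ker A₀ ∩ ker R₁ ∩ ker R₂ ∩ ker R₃ = {0}. Then the bivariate matrix polynomial P₂(z₁,z₂) = z₂³R₃ + z₁z₂R₂ + z₂R₁ + A₀ + G is stable with respect to D₂², where D₂ = {z ∈ ℂ : 0 < Arg z < π/3}: for all (μ₁,μ₂) ∈ D₂² and x ≠ 0, P₂(μ₁,μ₂)x ≠ 0. In particular P(λ) = λ³R₃ + λ²R₂ + λR₁ + A₀ + G has no eigenvalues in D₂. -/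

import Mathlib

open scoped ComplexOrder
open Matrix

/-- Basic facts about a complex number with argument in `(0, π/3)`. -/
lemma arg_sector_facts {μ : ℂ} (h1 : 0 < Complex.arg μ) (h2 : Complex.arg μ < Real.pi / 3) :
    0 < μ.re ∧ 0 < μ.im ∧ μ.im ^ 2 < 3 * μ.re ^ 2 := by
  have hμ0 : μ ≠ 0 := by
    rintro rfl; simp [Complex.arg_zero] at h1
  have hlt : Complex.arg μ < Real.pi / 2 := by
    have := Real.pi_pos; linarith
  have hre : 0 < μ.re := by
    have := Complex.abs_arg_lt_pi_div_two_iff (z := μ)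
    have habs : |Complex.arg μ| < Real.pi / 2 := by
      rw [abs_lt]; constructor <;> [linarith [Real.pi_pos]; exact hlt]
    rcases this.mp habs with h | h
    · exact h
    · exact absurd h hμ0
  have him : 0 < μ.im := by
    have h0 : 0 ≤ μ.im := Complex.arg_nonneg_iff.mp h1.le
    rcases h0.lt_or_eq with h | h
    · exact h
    · exfalso
      have : Complex.arg μ = 0 := Complex.arg_eq_zero_iff.mpr ⟨hre.le, h.symm⟩
      linarith
  refine ⟨hre, him, ?_⟩
  have htan : Real.tan (Complex.arg μ) < Real.tan (Real.pi / 3) :=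
    Real.tan_lt_tan_of_nonneg_of_lt_pi_div_two h1.le
      (by linarith [Real.pi_pos]) h2
  rw [Complex.tan_arg, Real.tan_pi_div_three] at htan
  have h3 : μ.im < Real.sqrt 3 * μ.re := by
    rw [div_lt_iff₀ hre] at htan; linarith
  have hsq : μ.im ^ 2 < (Real.sqrt 3 * μ.re) ^ 2 :=
    pow_lt_pow_left₀ h3 him.le (by norm_num)
  have : (Real.sqrt 3) ^ 2 = 3 := Real.sq_sqrt (by norm_num)
  nlinarith [hsq, this]

set_option maxHeartbeats 1000000 in
open scoped ComplexOrder in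
theorem stmt18 {n : ℕ} (R₁ R₂ R₃ A₀ G : Matrix (Fin n) (Fin n) ℂ)
    (hR₁ : R₁.PosSemidef) (hR₂ : R₂.PosSemidef) (hR₃ : R₃.PosSemidef)
    (hA₀ : A₀.IsHermitian) (hG : G.conjTranspose = -G)
    (hiG : ((-Complex.I) • G).PosSemidef)
    (hker : ∀ x : Fin n → ℂ, G.mulVec x = 0 → A₀.mulVec x = 0 → R₁.mulVec x = 0 →
      R₂.mulVec x = 0 → R₃.mulVec x = 0 → x = 0) :
    (∀ μ₁ μ₂ : ℂ,
      0 < Complex.arg μ₁ → Complex.arg μ₁ < Real.pi / 3 →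
      0 < Complex.arg μ₂ → Complex.arg μ₂ < Real.pi / 3 →
      ∀ x : Fin n → ℂ, x ≠ 0 →
        (μ₂ ^ 3 • R₃ + (μ₁ * μ₂) • R₂ + μ₂ • R₁ + A₀ + G).mulVec x ≠ 0) ∧
    (∀ μ : ℂ, 0 < Complex.arg μ → Complex.arg μ < Real.pi / 3 →
      (μ ^ 3 • R₃ + μ ^ 2 • R₂ + μ • R₁ + A₀ + G).det ≠ 0) := by
  have main : ∀ μ₁ μ₂ : ℂ,
      0 < Complex.arg μ₁ → Complex.arg μ₁ < Real.pi / 3 →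
      0 < Complex.arg μ₂ → Complex.arg μ₂ < Real.pi / 3 →
      ∀ x : Fin n → ℂ, x ≠ 0 →
        (μ₂ ^ 3 • R₃ + (μ₁ * μ₂) • R₂ + μ₂ • R₁ + A₀ + G).mulVec x ≠ 0 := by
    intro μ₁ μ₂ h11 h12 h21 h22 x hx hP
    obtain ⟨ha₁, hb₁, hs₁⟩ := arg_sector_facts h11 h12
    obtain ⟨ha₂, hb₂, hs₂⟩ := arg_sector_facts h21 h22
    have hq3 := (Complex.nonneg_iff).mp (hR₃.dotProduct_mulVec_nonneg x)
    have hq2 := (Complex.nonneg_iff).mp (hR₂.dotProduct_mulVec_nonneg x)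
    have hq1 := (Complex.nonneg_iff).mp (hR₁.dotProduct_mulVec_nonneg x)
    have hqG0 : star x ⬝ᵥ ((-Complex.I) • G) *ᵥ x = -Complex.I * (star x ⬝ᵥ G *ᵥ x) := by
      rw [Matrix.smul_mulVec, dotProduct_smul, smul_eq_mul]
    have hqGle := (Complex.nonneg_iff).mp (hiG.dotProduct_mulVec_nonneg x)
    rw [hqG0] at hqGle
    have hqGre : (star x ⬝ᵥ G *ᵥ x).re = 0 := by
      have := hqGle.2
      simp [Complex.mul_im] at this
      linarith
    have hqGim : 0 ≤ (star x ⬝ᵥ G *ᵥ x).im := by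
      have := hqGle.1
      simp [Complex.mul_re] at this
      linarith
    -- A₀ hermitian: the quadratic form is real
    have hqAim : (star x ⬝ᵥ A₀ *ᵥ x).im = 0 := by
      have hstar : star (star x ⬝ᵥ A₀ *ᵥ x) = star x ⬝ᵥ A₀ *ᵥ x := by
        rw [← Matrix.star_dotProduct_star, star_star, Matrix.star_mulVec, hA₀.eq,
          ← Matrix.dotProduct_mulVec]
      have := congrArg Complex.im hstar
      simp only [Complex.star_def, Complex.conj_im] at this
      linarith
    -- the scalar equation
    have heq : μ₂ ^ 3 * (star x ⬝ᵥ R₃ *ᵥ x) + (μ₁ * μ₂) * (star x ⬝ᵥ R₂ *ᵥ x)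
        + μ₂ * (star x ⬝ᵥ R₁ *ᵥ x) + (star x ⬝ᵥ A₀ *ᵥ x) + (star x ⬝ᵥ G *ᵥ x) = 0 := by
      have h := congrArg (fun v => star x ⬝ᵥ v) hP
      simp only [Matrix.add_mulVec, Matrix.smul_mulVec, dotProduct_add,
        dotProduct_smul, smul_eq_mul, dotProduct_zero] at h
      linear_combination h
    -- imaginary part
    have him := congrArg Complex.im heq
    simp only [Complex.add_im, Complex.mul_im, Complex.zero_im] at him
    rw [← hq3.2, ← hq2.2, ← hq1.2, hqAim] at him
    -- coefficients of the imaginary part are positive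
    have hc3 : 0 < (μ₂ ^ 3).im := by
      have h : μ₂ ^ 3 = μ₂ * μ₂ * μ₂ := by ring
      rw [h]
      simp only [Complex.mul_im, Complex.mul_re]
      nlinarith
    have hc2 : 0 < μ₁.re * μ₂.im + μ₁.im * μ₂.re := by nlinarith
    -- all terms vanish
    have hp3 := mul_nonneg hc3.le hq3.1
    have hp2 := mul_nonneg hc2.le hq2.1
    have hp1 := mul_nonneg hb₂.le hq1.1
    have h3z : (μ₂ ^ 3).im * (star x ⬝ᵥ R₃ *ᵥ x).re = 0 :=
      le_antisymm (by linarith [him, hp2, hp1, hqGim]) hp3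
    have h2z : (μ₁.re * μ₂.im + μ₁.im * μ₂.re) * (star x ⬝ᵥ R₂ *ᵥ x).re = 0 :=
      le_antisymm (by linarith [him, hp3, hp1, hqGim]) hp2
    have h1z : μ₂.im * (star x ⬝ᵥ R₁ *ᵥ x).re = 0 :=
      le_antisymm (by linarith [him, hp3, hp2, hqGim]) hp1
    have hq3re : (star x ⬝ᵥ R₃ *ᵥ x).re = 0 :=
      (mul_eq_zero.mp h3z).resolve_left hc3.ne'
    have hq2re : (star x ⬝ᵥ R₂ *ᵥ x).re = 0 :=
      (mul_eq_zero.mp h2z).resolve_left hc2.ne'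
    have hq1re : (star x ⬝ᵥ R₁ *ᵥ x).re = 0 :=
      (mul_eq_zero.mp h1z).resolve_left hb₂.ne'
    have hqGim0 : (star x ⬝ᵥ G *ᵥ x).im = 0 := by
      linarith [him, hp3, hp2, hp1, hqGim]
    have hR3x : R₃ *ᵥ x = 0 := (hR₃.dotProduct_mulVec_zero_iff x).mp
      (Complex.ext hq3re hq3.2.symm)
    have hR2x : R₂ *ᵥ x = 0 := (hR₂.dotProduct_mulVec_zero_iff x).mp
      (Complex.ext hq2re hq2.2.symm)
    have hR1x : R₁ *ᵥ x = 0 := (hR₁.dotProduct_mulVec_zero_iff x).mp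
      (Complex.ext hq1re hq1.2.symm)
    have hGx : G *ᵥ x = 0 := by
      have hqGzero : star x ⬝ᵥ G *ᵥ x = 0 := Complex.ext hqGre hqGim0
      have hz : star x ⬝ᵥ ((-Complex.I) • G) *ᵥ x = 0 := by
        rw [hqG0, hqGzero, mul_zero]
      have h := (hiG.dotProduct_mulVec_zero_iff x).mp hz
      rw [Matrix.smul_mulVec] at h
      rcases smul_eq_zero.mp h with h' | h'
      · exact absurd h' (by simp [Complex.I_ne_zero])
      · exact h'
    have hA0x : A₀ *ᵥ x = 0 := by
      have h := hP
      simp only [Matrix.add_mulVec, Matrix.smul_mulVec, hR3x, hR2x, hR1x, hGx,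
        smul_zero, add_zero, zero_add] at h
      exact h
    exact hx (hker x hGx hA0x hR1x hR2x hR3x)
  refine ⟨main, ?_⟩
  intro μ h1 h2 hdet
  obtain ⟨v, hv, hveq⟩ := (Matrix.exists_mulVec_eq_zero_iff).mpr hdet
  have hveq' : (μ ^ 3 • R₃ + (μ * μ) • R₂ + μ • R₁ + A₀ + G) *ᵥ v = 0 := by
    rw [show μ * μ = μ ^ 2 by ring]; exact hveq
  exact main μ μ h1 h2 h1 h2 v hv hveq'
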